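/- Let α > −1 be real, N ≥ 1, and let t_1, …, t_N be pairwise distinct positive reals. Then, as x = (x_1,…,x_N) tends to (0,…,0) through tuples of pairwise distinct positive reals, the ratio det_{1≤i,j≤N}[ J_α(t_j · x_i) ] / ( (∏_{k=1}^N x_k^α) · Δ(x²) ) converges to (−1)^{N(N−1)/2} · (∏_{k=1}^N t_k^α) · Δ(t²) · 2^{−αN − N(N−1)} / ∏_{j=1}^N ( (j−1)! · Γ(α+j) ). -/

import Mathlib

open Filter

/-- The Bessel function of the first kind, for `x > 0`,
`J_α(x) = Σ_{k=0}^∞ (-1)^k (x/2)^{2k+α} / (k! Γ(k+α+1))`. -/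
noncomputable def besselJ (α x : ℝ) : ℝ :=
  ∑' k : ℕ, (-1 : ℝ) ^ k * (x / 2) ^ (2 * (k : ℝ) + α) /
    ((Nat.factorial k : ℝ) * Real.Gamma ((k : ℝ) + α + 1))

/-- The Vandermonde product `Δ(x) = ∏_{1 ≤ j < k ≤ N} (x_k - x_j)`. -/
def vandermondeProd {N : ℕ} (x : Fin N → ℝ) : ℝ :=
  ∏ p ∈ Finset.univ.filter (fun p : Fin N × Fin N => p.1 < p.2), (x p.2 - x p.1)

open Finset

noncomputable def besselA (α : ℝ) (k : ℕ) : ℝ :=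
  (-1) ^ k / (4 ^ k * (Nat.factorial k : ℝ) * Real.Gamma ((k : ℝ) + α + 1))

/-- Complete homogeneous symmetric function of degree `d` in `n` variables. -/
noncomputable def Hcomp : (n : ℕ) → ℕ → (Fin n → ℝ) → ℝ
  | 0, 0, _ => 1
  | 0, _ + 1, _ => 0
  | n + 1, d, u => ∑ p ∈ Finset.HasAntidiagonal.antidiagonal d, (u 0) ^ p.1 * Hcomp n p.2 (Fin.tail u)

/-- Lagrange/divided-difference weights. -/
noncomputable def Wt {n : ℕ} (u : Fin n → ℝ) (i : Fin n) : ℝ :=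
  ∏ j ∈ Finset.univ.erase i, (u i - u j)⁻¹

/-- Divided difference of the monomial `x ^ k` (explicit formula). -/
noncomputable def Sdd {n : ℕ} (k : ℕ) (u : Fin n → ℝ) : ℝ := ∑ i, (u i) ^ k * Wt u i

open Polynomial in
lemma coeff_lagrange_basis {n : ℕ} (u : Fin n → ℝ) (hu : Function.Injective u) (i : Fin n) :
    (Lagrange.basis Finset.univ u i).coeff (n - 1) = Wt u i := by
  have hinj : Set.InjOn u (Finset.univ : Finset (Fin n)) := fun a _ b _ h => hu h
  have hd : (Lagrange.basis Finset.univ u i).natDegree = n - 1 := by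
    rw [Lagrange.natDegree_basis hinj (Finset.mem_univ i), Finset.card_univ, Fintype.card_fin]
  rw [← hd, Polynomial.coeff_natDegree]
  unfold Lagrange.basis Wt
  rw [Polynomial.leadingCoeff_prod]
  refine Finset.prod_congr rfl fun j hj => ?_
  unfold Lagrange.basisDivisor
  rw [Polynomial.leadingCoeff_mul, Polynomial.leadingCoeff_C,
    (Polynomial.monic_X_sub_C _).leadingCoeff, mul_one]

open Polynomial in
lemma Sdd_of_lt {n : ℕ} (k : ℕ) (hk : k < n) (u : Fin n → ℝ) (hu : Function.Injective u) :
    Sdd k u = if k = n - 1 then 1 else 0 := by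
  have hinj : Set.InjOn u (Finset.univ : Finset (Fin n)) := fun a _ b _ h => hu h
  have hcard : ((Finset.univ : Finset (Fin n)).card : WithBot ℕ) = (n : WithBot ℕ) := by
    rw [Finset.card_univ, Fintype.card_fin]
  have hdeg : ((X : ℝ[X]) ^ k).degree < (Finset.univ : Finset (Fin n)).card := by
    rw [degree_X_pow, hcard]
    exact_mod_cast hk
  have h := Lagrange.eq_interpolate hinj hdeg
  have h2 := congrArg (fun p => Polynomial.coeff p (n - 1)) h
  simp only [Lagrange.interpolate_apply] at h2
  rw [coeff_X_pow] at h2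
  rw [Polynomial.finset_sum_coeff] at h2
  simp only [Polynomial.coeff_C_mul, coeff_lagrange_basis u hu] at h2
  simp only [eval_pow, eval_X] at h2
  rw [Sdd, ← h2]
  by_cases hkn : k = n - 1
  · simp [hkn, eq_comm]
  · rw [if_neg hkn, if_neg (fun h : n - 1 = k => hkn h.symm)]

lemma Hcomp_zero_arg (b : ℕ) (w : Fin 0 → ℝ) : Hcomp 0 b w = if b = 0 then 1 else 0 := by
  cases b <;> simp [Hcomp]

lemma Hcomp_at_zero (n d : ℕ) : Hcomp n d 0 = if d = 0 then 1 else 0 := by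
  induction n generalizing d with
  | zero => cases d <;> simp [Hcomp]
  | succ n ih =>
    have ht : Fin.tail (0 : Fin (n + 1) → ℝ) = 0 := rfl
    rcases d with _ | d
    · simp [Hcomp, ht, ih]
    · rw [Hcomp, if_neg (Nat.succ_ne_zero d)]
      apply Finset.sum_eq_zero
      intro p hp
      rw [Finset.HasAntidiagonal.mem_antidiagonal] at hp
      rcases Nat.eq_zero_or_pos p.1 with h1 | h1
      · have h2 : p.2 ≠ 0 := by omega
        simp [ht, ih, h2]
      · simp [zero_pow (by omega : p.1 ≠ 0)]

lemma Hcomp_continuous (n d : ℕ) : Continuous (Hcomp n d) := by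
  induction n generalizing d with
  | zero => cases d <;> simp [Hcomp] <;> exact continuous_const
  | succ n ih =>
    show Continuous fun u => Hcomp (n+1) d u
    simp only [Hcomp]
    apply continuous_finset_sum
    intro p _
    exact ((continuous_apply (0 : Fin (n+1))).pow p.1).mul
      ((ih p.2).comp (continuous_pi fun j => continuous_apply j.succ))

lemma Hcomp_bound (n d : ℕ) (u : Fin n → ℝ) (hu : ∀ i, |u i| ≤ 1) :
    |Hcomp n d u| ≤ ((d : ℝ) + 1) ^ n := by
  induction n generalizing d with
  | zero => cases d <;> simp [Hcomp]
  | succ n ih =>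
    show |Hcomp (n+1) d u| ≤ _
    rw [Hcomp]
    calc |∑ p ∈ Finset.HasAntidiagonal.antidiagonal d, (u 0) ^ p.1 * Hcomp n p.2 (Fin.tail u)|
        ≤ ∑ p ∈ Finset.HasAntidiagonal.antidiagonal d, |(u 0) ^ p.1 * Hcomp n p.2 (Fin.tail u)| :=
          Finset.abs_sum_le_sum_abs _ _
      _ ≤ ∑ p ∈ Finset.HasAntidiagonal.antidiagonal d, ((d : ℝ) + 1) ^ n := by
          apply Finset.sum_le_sum
          intro p hp
          rw [Finset.HasAntidiagonal.mem_antidiagonal] at hp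
          rw [abs_mul, abs_pow]
          have h1 : |u 0| ^ p.1 ≤ 1 := pow_le_one₀ (abs_nonneg _) (hu 0)
          have h2 : |Hcomp n p.2 (Fin.tail u)| ≤ ((p.2 : ℝ) + 1) ^ n :=
            ih p.2 (Fin.tail u) (fun i => hu i.succ)
          have hp2 : (p.2 : ℝ) + 1 ≤ (d : ℝ) + 1 := by
            have : p.2 ≤ d := by omega
            have := (Nat.cast_le (α := ℝ)).2 this
            linarith
          have h3 : ((p.2 : ℝ) + 1) ^ n ≤ ((d : ℝ) + 1) ^ n :=
            pow_le_pow_left₀ (by positivity) hp2 n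
          calc |u 0| ^ p.1 * |Hcomp n p.2 (Fin.tail u)| ≤ 1 * (((d : ℝ) + 1) ^ n) := by
                apply mul_le_mul h1 (h2.trans h3) (abs_nonneg _) zero_le_one
            _ = ((d : ℝ) + 1) ^ n := one_mul _
      _ = ((Finset.HasAntidiagonal.antidiagonal d).card : ℝ) * ((d : ℝ) + 1) ^ n := by
          rw [Finset.sum_const, nsmul_eq_mul]
      _ ≤ ((d : ℝ) + 1) ^ (n + 1) := by
          rw [Finset.Nat.card_antidiagonal]
          push_cast
          rw [pow_succ]
          ring_nf
          exact le_refl _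

lemma prod_erase_succ {n : ℕ} (g : Fin (n + 1) → ℝ) (i : Fin n) :
    ∏ j ∈ Finset.univ.erase i.succ, g j = g 0 * ∏ j ∈ Finset.univ.erase i, g j.succ := by
  have hset : (Finset.univ.erase i.succ : Finset (Fin (n + 1))) =
      insert 0 ((Finset.univ.erase i).image Fin.succ) := by
    ext j
    simp only [Finset.mem_erase, Finset.mem_univ, and_true, Finset.mem_insert, Finset.mem_image]
    constructor
    · intro hj
      rcases Fin.eq_zero_or_eq_succ j with h | ⟨j', rfl⟩
      · exact Or.inl h
      · exact Or.inr ⟨j', fun h => hj (by rw [h]), rfl⟩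
    · rintro (rfl | ⟨j', hj', rfl⟩)
      · exact (Fin.succ_ne_zero i).symm
      · exact fun h => hj' (Fin.succ_injective _ h)
  rw [hset, Finset.prod_insert, Finset.prod_image]
  · intro a _ b _ h; exact Fin.succ_injective _ h
  · simp only [Finset.mem_image]
    rintro ⟨j', _, hj'⟩
    exact Fin.succ_ne_zero j' hj'

lemma Wt_succ {n : ℕ} (u : Fin (n + 1) → ℝ) (i : Fin n) :
    Wt u i.succ = (u i.succ - u 0)⁻¹ * Wt (Fin.tail u) i := by
  rw [Wt, prod_erase_succ (fun j => (u i.succ - u j)⁻¹) i]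
  rfl

lemma Sdd_rec {m : ℕ} (k : ℕ) (u : Fin (m + 2) → ℝ) (hu : Function.Injective u) :
    Sdd k u = ∑ t ∈ Finset.range k, u 0 ^ t * Sdd (k - 1 - t) (Fin.tail u) := by
  have hzero : Sdd 0 u = 0 := by
    rw [Sdd_of_lt 0 (by omega) u hu, if_neg (by omega)]
  have hgeom : ∀ i : Fin (m + 1), u i.succ ^ k * (u i.succ - u 0)⁻¹ =
      (∑ t ∈ Finset.range k, u 0 ^ t * u i.succ ^ (k - 1 - t)) + u 0 ^ k * (u i.succ - u 0)⁻¹ := by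
    intro i
    have hne : u i.succ - u 0 ≠ 0 := by
      intro h
      exact Fin.succ_ne_zero i (hu (by linarith))
    have hg := geom_sum₂_mul (u 0) (u i.succ) k
    field_simp
    linarith [hg]
  -- expand
  rw [Sdd, Fin.sum_univ_succ]
  have hterm : ∀ i : Fin (m + 1), u i.succ ^ k * Wt u i.succ =
      (∑ t ∈ Finset.range k, u 0 ^ t * (Fin.tail u i ^ (k - 1 - t) * Wt (Fin.tail u) i))
        + u 0 ^ k * Wt u i.succ := by
    intro i
    rw [Wt_succ, ← mul_assoc, hgeom i, add_mul, mul_assoc, ← Wt_succ, Finset.sum_mul]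
    congr 1
    exact Finset.sum_congr rfl fun t _ =>
      mul_assoc (u 0 ^ t) (u i.succ ^ (k - 1 - t)) (Wt (Fin.tail u) i)
  rw [Finset.sum_congr rfl (fun i (_ : i ∈ Finset.univ) => hterm i), Finset.sum_add_distrib,
    ← Finset.mul_sum]
  have hswap : (∑ i : Fin (m + 1), ∑ t ∈ Finset.range k,
      u 0 ^ t * (Fin.tail u i ^ (k - 1 - t) * Wt (Fin.tail u) i))
      = ∑ t ∈ Finset.range k, u 0 ^ t * Sdd (k - 1 - t) (Fin.tail u) := by
    rw [Finset.sum_comm]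
    exact Finset.sum_congr rfl fun t _ => by rw [← Finset.mul_sum]; rfl
  rw [hswap]
  have h2 : Sdd 0 u = Wt u 0 + ∑ i : Fin (m + 1), Wt u i.succ := by
    rw [Sdd, Fin.sum_univ_succ]
    simp
  have h3 : Wt u 0 + ∑ i : Fin (m + 1), Wt u i.succ = 0 := by rw [← h2]; exact hzero
  have h4 : u 0 ^ k * Wt u 0 + u 0 ^ k * ∑ i : Fin (m + 1), Wt u i.succ = 0 := by
    rw [← mul_add, h3, mul_zero]
  linarith

lemma Sdd_eq (m : ℕ) (k : ℕ) (u : Fin (m + 1) → ℝ) (hu : Function.Injective u) :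
    Sdd k u = if m ≤ k then Hcomp (m + 1) (k - m) u else 0 := by
  induction m generalizing k with
  | zero =>
    rw [if_pos (Nat.zero_le k)]
    have h1 : Sdd k u = u 0 ^ k := by
      rw [Sdd]
      rw [Fin.sum_univ_one]
      have : Wt u 0 = 1 := by
        rw [Wt]
        have : (Finset.univ.erase (0 : Fin 1)) = ∅ := by decide
        rw [this, Finset.prod_empty]
      rw [this, mul_one]
    rw [h1, Nat.sub_zero, Hcomp]
    rw [Finset.Nat.sum_antidiagonal_eq_sum_range_succ_mk]
    rw [Finset.sum_range_succ]
    simp [Hcomp_zero_arg]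
    apply Finset.sum_eq_zero
    intro t ht
    rw [Finset.mem_range] at ht
    rw [if_neg (by omega)]
  | succ m ih =>
    have htail : Function.Injective (Fin.tail u) :=
      fun a b h => Fin.succ_injective _ (hu h)
    rw [Sdd_rec k u hu]
    have hterm : ∀ t ∈ Finset.range k, u 0 ^ t * Sdd (k - 1 - t) (Fin.tail u)
        = u 0 ^ t * (if m ≤ k - 1 - t then Hcomp (m + 1) (k - 1 - t - m) (Fin.tail u) else 0) :=
      fun t _ => by rw [ih _ _ htail]
    rw [Finset.sum_congr rfl hterm]
    by_cases hk : m + 1 ≤ k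
    · rw [if_pos hk]
      have hsub : Finset.range (k - m) ⊆ Finset.range k := by
        apply Finset.range_subset_range.2; omega
      rw [← Finset.sum_subset hsub (by
        intro t ht hts
        rw [Finset.mem_range] at ht
        rw [Finset.mem_range, not_lt] at hts
        rw [if_neg (by omega), mul_zero])]
      rw [Hcomp]
      rw [Finset.Nat.sum_antidiagonal_eq_sum_range_succ_mk]
      rw [show (k - (m + 1)).succ = k - m by omega]
      apply Finset.sum_congr rfl
      intro t ht
      rw [Finset.mem_range] at ht
      rw [if_pos (by omega)]
      have : k - 1 - t - m = k - (m + 1) - t := by omega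
      rw [this]
    · rw [if_neg hk]
      apply Finset.sum_eq_zero
      intro t ht
      rw [Finset.mem_range] at ht
      rw [if_neg (by omega), mul_zero]

noncomputable def Ecomp (m : ℕ) (c : ℕ → ℝ) (u : Fin (m + 1) → ℝ) : ℝ :=
  ∑' k : ℕ, c k * (if m ≤ k then Hcomp (m + 1) (k - m) u else 0)

lemma sum_tsum_eq_Ecomp (m : ℕ) (c : ℕ → ℝ) (u : Fin (m + 1) → ℝ)
    (hu : Function.Injective u) (hs : ∀ i, Summable fun k => c k * u i ^ k) :
    ∑ i : Fin (m + 1), (∑' k : ℕ, c k * u i ^ k) * Wt u i = Ecomp m c u := by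
  have h1 : ∀ i : Fin (m + 1), (∑' k : ℕ, c k * u i ^ k) * Wt u i
      = ∑' k : ℕ, c k * u i ^ k * Wt u i := fun i => (tsum_mul_right).symm
  rw [Finset.sum_congr rfl fun i _ => h1 i]
  rw [← Summable.tsum_finsetSum (fun i _ => (hs i).mul_right _)]
  apply tsum_congr
  intro k
  have : ∑ i : Fin (m + 1), c k * u i ^ k * Wt u i = c k * Sdd k u := by
    rw [Sdd, Finset.mul_sum]
    exact Finset.sum_congr rfl fun i _ => by ring
  rw [this, Sdd_eq m k u hu]

lemma Ecomp_at_zero (m : ℕ) (c : ℕ → ℝ) : Ecomp m c 0 = c m := by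
  rw [Ecomp]
  rw [tsum_eq_single m]
  · rw [if_pos (le_refl m), Nat.sub_self, Hcomp_at_zero, if_pos rfl, mul_one]
  · intro k hk
    by_cases h : m ≤ k
    · rw [if_pos h, Hcomp_at_zero, if_neg (by omega), mul_zero]
    · rw [if_neg h, mul_zero]

lemma Ecomp_tendsto (m : ℕ) (c : ℕ → ℝ) (Nn : ℕ) (hm : m + 1 ≤ Nn)
    (hb : Summable fun k => |c k| * ((k : ℝ) + 1) ^ Nn) :
    Filter.Tendsto (Ecomp m c) (nhds 0) (nhds (c m)) := by
  have hcont : ContinuousOn (Ecomp m c) (Metric.closedBall (0 : Fin (m + 1) → ℝ) 1) := by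
    apply continuousOn_tsum (u := fun k => |c k| * ((k : ℝ) + 1) ^ Nn)
    · intro k
      by_cases h : m ≤ k
      · simp only [if_pos h]
        exact (continuous_const.mul (Hcomp_continuous (m + 1) (k - m))).continuousOn
      · simp only [if_neg h]
        exact continuousOn_const
    · exact hb
    · intro k x hx
      have hxb : ∀ i, |x i| ≤ 1 := by
        intro i
        have h1 : ‖x i‖ ≤ ‖x‖ := norm_le_pi_norm x i
        rw [Metric.mem_closedBall, dist_zero_right] at hx
        exact le_trans h1 hx
      have hk1 : (1 : ℝ) ≤ (k : ℝ) + 1 := by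
        have : (0 : ℝ) ≤ (k : ℝ) := Nat.cast_nonneg k
        linarith
      by_cases h : m ≤ k
      · rw [if_pos h, norm_mul, Real.norm_eq_abs, Real.norm_eq_abs]
        have h1 : |Hcomp (m + 1) (k - m) x| ≤ ((k : ℝ) + 1) ^ Nn := by
          calc |Hcomp (m + 1) (k - m) x| ≤ (((k - m : ℕ) : ℝ) + 1) ^ (m + 1) :=
                Hcomp_bound (m + 1) (k - m) x hxb
            _ ≤ ((k : ℝ) + 1) ^ (m + 1) := by
                apply pow_le_pow_left₀ (by positivity)
                have : ((k - m : ℕ) : ℝ) ≤ (k : ℝ) := by exact_mod_cast Nat.sub_le k m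
                linarith
            _ ≤ ((k : ℝ) + 1) ^ Nn := pow_le_pow_right₀ hk1 hm
        exact mul_le_mul_of_nonneg_left h1 (abs_nonneg _)
      · rw [if_neg h, mul_zero, norm_zero]
        positivity
  have h0 : (0 : Fin (m + 1) → ℝ) ∈ Metric.closedBall (0 : Fin (m + 1) → ℝ) 1 :=
    Metric.mem_closedBall_self zero_le_one
  have hca : ContinuousAt (Ecomp m c) 0 :=
    hcont.continuousAt (Metric.closedBall_mem_nhds 0 one_pos)
  rw [← Ecomp_at_zero m c]
  exact hca.tendsto

/-- The window of the first `i+1` coordinates. -/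
def window {N : ℕ} (u : Fin N → ℝ) (i : Fin N) : Fin (i.val + 1) → ℝ :=
  fun p => u (Fin.castLE i.isLt p)

lemma window_injective {N : ℕ} {u : Fin N → ℝ} (hu : Function.Injective u) (i : Fin N) :
    Function.Injective (window u i) :=
  fun a b h => Fin.castLE_injective _ (hu h)

/-- Lower-triangular matrix of divided-difference weights. -/
noncomputable def Lmat {N : ℕ} (u : Fin N → ℝ) : Matrix (Fin N) (Fin N) ℝ :=
  Matrix.of fun i l => if h : l.val ≤ i.val then Wt (window u i) ⟨l.val, by omega⟩ else 0

/-- Double product form of the Vandermonde product. -/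
noncomputable def dblProd {N : ℕ} (u : Fin N → ℝ) : ℝ :=
  ∏ i : Fin N, ∏ j : Fin i.val, (u i - u (Fin.castLT j (lt_trans j.isLt i.isLt)))

lemma vandermondeProd_eq_dblProd {N : ℕ} (u : Fin N → ℝ) :
    vandermondeProd u = dblProd u := by
  rw [vandermondeProd, dblProd]
  rw [← Finset.prod_sigma (Finset.univ : Finset (Fin N)) (fun i => (Finset.univ : Finset (Fin i.val)))
    (fun q => u q.1 - u (Fin.castLT q.2 (lt_trans q.2.isLt q.1.isLt)))]
  refine Finset.prod_bij'
    (fun p hp => (⟨p.2, ⟨p.1.val, Finset.mem_filter.1 hp |>.2⟩⟩ : (i : Fin N) × Fin i.val))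
    (fun q _ => (⟨⟨q.2.val, lt_trans q.2.isLt q.1.isLt⟩, q.1⟩ : Fin N × Fin N))
    ?_ ?_ ?_ ?_ ?_
  · intro p hp
    simp [Finset.mem_sigma]
  · intro q _
    rw [Finset.mem_filter]
    exact ⟨Finset.mem_univ _, q.2.isLt⟩
  · intro p hp
    ext <;> rfl
  · intro q _
    rfl
  · intro p hp
    rfl

lemma prod_erase_last {n : ℕ} (g : Fin (n + 1) → ℝ) :
    ∏ j ∈ Finset.univ.erase (Fin.last n), g j = ∏ j : Fin n, g j.castSucc := by
  have hset : (Finset.univ.erase (Fin.last n)) = Finset.univ.image Fin.castSucc := by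
    ext j
    simp only [Finset.mem_erase, Finset.mem_univ, and_true, Finset.mem_image, true_and]
    constructor
    · intro hj
      rcases Fin.eq_castSucc_or_eq_last j with ⟨j', rfl⟩ | rfl
      · exact ⟨j', rfl⟩
      · exact absurd rfl hj
    · rintro ⟨j', rfl⟩
      exact (Fin.castSucc_lt_last j').ne
  rw [hset, Finset.prod_image (fun a _ b _ h => Fin.castSucc_injective _ h)]

lemma det_Lmat {N : ℕ} (u : Fin N → ℝ) : (Lmat u).det = (dblProd u)⁻¹ := by
  have htri : (Lmat u).BlockTriangular OrderDual.toDual := by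
    intro i l h
    have : ¬ l.val ≤ i.val := by
      simp only [OrderDual.toDual_lt_toDual] at h
      exact not_le.2 h
    simp only [Lmat, Matrix.of_apply]
    rw [dif_neg this]
  rw [Matrix.det_of_lowerTriangular _ htri, dblProd, ← Finset.prod_inv_distrib]
  apply Finset.prod_congr rfl
  intro i _
  have hdiag : Lmat u i i = Wt (window u i) (Fin.last i.val) := by
    simp only [Lmat, Matrix.of_apply, dif_pos (le_refl i.val)]
    rfl
  rw [hdiag, Wt, prod_erase_last, ← Finset.prod_inv_distrib]
  apply Finset.prod_congr rfl
  intro j _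
  have h1 : Fin.castLE i.isLt (Fin.last i.val) = i := Fin.ext rfl
  have h2 : Fin.castLE i.isLt (Fin.castSucc j) = Fin.castLT j (lt_trans j.isLt i.isLt) :=
    Fin.ext rfl
  show (u (Fin.castLE i.isLt (Fin.last i.val)) - u (Fin.castLE i.isLt (Fin.castSucc j)))⁻¹ = _
  rw [h1, h2]

lemma dblProd_ne_zero {N : ℕ} (u : Fin N → ℝ) (hu : Function.Injective u) : dblProd u ≠ 0 := by
  rw [dblProd]
  apply Finset.prod_ne_zero_iff.2
  intro i _
  apply Finset.prod_ne_zero_iff.2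
  intro j _
  have : Fin.castLT j (lt_trans j.isLt i.isLt) ≠ i := by
    intro h
    have := congrArg Fin.val h
    simp only [Fin.castLT] at this
    omega
  exact sub_ne_zero.2 fun h => this (hu h.symm)

lemma Lmat_mul_apply {N : ℕ} (u : Fin N → ℝ) (hu : Function.Injective u) (c : Fin N → ℕ → ℝ)
    (hs : ∀ j x, Summable fun k => c j k * x ^ k) (i j : Fin N) :
    (Lmat u * (Matrix.of fun l j' => ∑' k : ℕ, c j' k * u l ^ k)) i j
      = Ecomp i.val (c j) (window u i) := by
  rw [Matrix.mul_apply]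
  have hvan : ∀ l ∈ (Finset.univ : Finset (Fin N)), l ∉ Finset.Iic i →
      Lmat u i l * (Matrix.of fun l j' => ∑' k : ℕ, c j' k * u l ^ k) l j = 0 := by
    intro l _ hl
    rw [Finset.mem_Iic] at hl
    have : ¬ l.val ≤ i.val := hl
    simp only [Lmat, Matrix.of_apply]
    rw [dif_neg this, zero_mul]
  rw [← Finset.sum_subset (Finset.subset_univ (Finset.Iic i)) hvan]
  have himg : Finset.Iic i = Finset.univ.image (Fin.castLE i.isLt) := by
    ext x
    simp only [Finset.mem_Iic, Finset.mem_image, Finset.mem_univ, true_and]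
    constructor
    · intro hx
      exact ⟨⟨x.val, by omega⟩, Fin.ext rfl⟩
    · rintro ⟨p, rfl⟩
      show p.val ≤ i.val
      omega
  rw [himg, Finset.sum_image (fun a _ b _ h => Fin.castLE_injective _ h)]
  rw [← sum_tsum_eq_Ecomp i.val (c j) (window u i) (window_injective hu i)
    (fun p => hs j (window u i p))]
  apply Finset.sum_congr rfl
  intro p _
  have hle : (Fin.castLE i.isLt p).val ≤ i.val := by
    have : p.val < i.val + 1 := p.isLt
    show p.val ≤ i.val
    omega
  simp only [Lmat, Matrix.of_apply]
  rw [dif_pos hle]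
  have hp : (⟨(Fin.castLE i.isLt p).val, by omega⟩ : Fin (i.val + 1)) = p := Fin.ext rfl
  rw [hp, mul_comm]
  rfl

lemma det_factor {N : ℕ} (u : Fin N → ℝ) (hu : Function.Injective u) (c : Fin N → ℕ → ℝ)
    (hs : ∀ j x, Summable fun k => c j k * x ^ k) :
    (Matrix.of fun l j' => ∑' k : ℕ, c j' k * u l ^ k).det
      = vandermondeProd u * (Matrix.of fun i j => Ecomp i.val (c j) (window u i)).det := by
  have h2 : Lmat u * (Matrix.of fun l j' => ∑' k : ℕ, c j' k * u l ^ k)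
      = Matrix.of fun i j => Ecomp i.val (c j) (window u i) := by
    ext i j
    exact Lmat_mul_apply u hu c hs i j
  have h1 := congrArg Matrix.det h2
  rw [Matrix.det_mul, det_Lmat] at h1
  have hne : dblProd u ≠ 0 := dblProd_ne_zero u hu
  rw [vandermondeProd_eq_dblProd]
  field_simp at h1
  rw [h1]

lemma core_tendsto {N : ℕ} (c : Fin N → ℕ → ℝ)
    (hs : ∀ j x, Summable fun k => c j k * x ^ k)
    (hb : ∀ j, Summable fun k => |c j k| * ((k : ℝ) + 1) ^ N) :
    Filter.Tendsto (fun u : Fin N → ℝ =>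
        (Matrix.of fun l j' => ∑' k : ℕ, c j' k * u l ^ k).det / vandermondeProd u)
      (nhdsWithin 0 {u : Fin N → ℝ | Function.Injective u})
      (nhds (Matrix.of (fun i j : Fin N => c j i.val)).det) := by
  have hE : ∀ i j : Fin N, Filter.Tendsto (fun u : Fin N → ℝ => Ecomp i.val (c j) (window u i))
      (nhds 0) (nhds (c j i.val)) := by
    intro i j
    have h1 := Ecomp_tendsto i.val (c j) N i.isLt (hb j)
    have hwc : Continuous (fun u : Fin N → ℝ => window u i) :=
      continuous_pi fun p => continuous_apply _
    have hw : Filter.Tendsto (fun u : Fin N → ℝ => window u i) (nhds 0) (nhds 0) := by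
      have h0 : window (0 : Fin N → ℝ) i = 0 := rfl
      simpa [h0] using hwc.tendsto 0
    exact h1.comp hw
  have hmat : Filter.Tendsto (fun u : Fin N → ℝ =>
      (Matrix.of fun i j => Ecomp i.val (c j) (window u i)))
      (nhds 0) (nhds (Matrix.of (fun i j : Fin N => c j i.val))) := by
    apply tendsto_pi_nhds.2
    intro i
    apply tendsto_pi_nhds.2
    intro j
    exact hE i j
  have hdetc : Continuous (Matrix.det : Matrix (Fin N) (Fin N) ℝ → ℝ) :=
    Continuous.matrix_det continuous_id
  have hdet := (hdetc.continuousAt.tendsto).comp hmat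
  apply Filter.Tendsto.congr' ?_ (hdet.mono_left nhdsWithin_le_nhds)
  filter_upwards [self_mem_nhdsWithin] with u hu
  have hu' : Function.Injective u := hu
  rw [det_factor u hu' c hs, vandermondeProd_eq_dblProd]
  have hne : dblProd u ≠ 0 := dblProd_ne_zero u hu'
  rw [mul_div_cancel_left₀ _ hne]
  rfl

lemma Gamma_pos_aux (α : ℝ) (hα : -1 < α) (k : ℕ) : 0 < Real.Gamma ((k : ℝ) + α + 1) :=
  Real.Gamma_pos_of_pos (by have := Nat.cast_nonneg (α := ℝ) k; linarith)

lemma besselA_abs (α : ℝ) (hα : -1 < α) (k : ℕ) :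
    |besselA α k| = (4 ^ k * (Nat.factorial k : ℝ) * Real.Gamma ((k : ℝ) + α + 1))⁻¹ := by
  have hΓ := Gamma_pos_aux α hα k
  have hfac : (0 : ℝ) < (Nat.factorial k : ℝ) := by exact_mod_cast k.factorial_pos
  have hpos : (0 : ℝ) < 4 ^ k * (Nat.factorial k : ℝ) * Real.Gamma ((k : ℝ) + α + 1) := by
    apply mul_pos (mul_pos (by positivity) hfac) hΓ
  rw [besselA, abs_div, abs_pow, abs_neg, abs_one, one_pow, one_div, abs_of_pos hpos]

lemma besselA_master (α : ℝ) (hα : -1 < α) (Q : ℝ) (hQ : 0 ≤ Q) (N : ℕ) :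
    Summable fun k : ℕ => |besselA α k| * Q ^ k * ((k : ℝ) + 1) ^ N := by
  obtain ⟨K₁, hK₁⟩ := exists_nat_ge (Q * 2 ^ N)
  obtain ⟨K₂, hK₂⟩ := exists_nat_ge (-α)
  apply summable_of_ratio_norm_eventually_le (r := 1 / 2) (by norm_num)
  filter_upwards [Filter.eventually_ge_atTop (max K₁ K₂)] with k hk
  have hk₁ : (K₁ : ℝ) ≤ (k : ℝ) := by exact_mod_cast le_trans (le_max_left _ _) hk
  have hk₂ : (K₂ : ℝ) ≤ (k : ℝ) := by exact_mod_cast le_trans (le_max_right _ _) hk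
  set x : ℝ := (k : ℝ) with hx
  have hx0 : 0 ≤ x := Nat.cast_nonneg k
  have hΓ := Gamma_pos_aux α hα k
  have hfac : (0 : ℝ) < (Nat.factorial k : ℝ) := by exact_mod_cast k.factorial_pos
  have hA : (0 : ℝ) < 4 ^ k * (Nat.factorial k : ℝ) * Real.Gamma (x + α + 1) :=
    mul_pos (mul_pos (by positivity) hfac) hΓ
  have hΓ1 := Gamma_pos_aux α hα (k + 1)
  have hfac1 : (0 : ℝ) < (Nat.factorial (k + 1) : ℝ) := by exact_mod_cast (k + 1).factorial_pos
  have hA1 : (0 : ℝ) < 4 ^ (k + 1) * (Nat.factorial (k + 1) : ℝ) *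
      Real.Gamma (((k + 1 : ℕ) : ℝ) + α + 1) := mul_pos (mul_pos (by positivity) hfac1) hΓ1
  rw [Real.norm_eq_abs, Real.norm_eq_abs]
  have hterm : ∀ m : ℕ, |(|besselA α m| * Q ^ m * ((m : ℝ) + 1) ^ N)|
      = |besselA α m| * Q ^ m * ((m : ℝ) + 1) ^ N := by
    intro m
    apply abs_of_nonneg
    positivity
  rw [hterm, hterm, besselA_abs α hα, besselA_abs α hα]
  have e1 : (4 ^ (k + 1) * (Nat.factorial (k + 1) : ℝ) * Real.Gamma (((k + 1 : ℕ) : ℝ) + α + 1))⁻¹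
        * Q ^ (k + 1) * (((k + 1 : ℕ) : ℝ) + 1) ^ N
      = (Q ^ (k + 1) * ((x + 2) ^ N)) / (4 ^ (k + 1) * (Nat.factorial (k + 1) : ℝ) *
        Real.Gamma (((k + 1 : ℕ) : ℝ) + α + 1)) := by
    push_cast
    ring
  have e2 : 1 / 2 * ((4 ^ k * (Nat.factorial k : ℝ) * Real.Gamma ((k : ℝ) + α + 1))⁻¹
        * Q ^ k * ((k : ℝ) + 1) ^ N)
      = (Q ^ k * ((x + 1) ^ N)) / (2 * (4 ^ k * (Nat.factorial k : ℝ) *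
        Real.Gamma (x + α + 1))) := by
    push_cast
    ring
  rw [e1, e2]
  rw [div_le_div_iff₀ hA1 (by positivity)]
  have hGsucc : Real.Gamma (((k + 1 : ℕ) : ℝ) + α + 1) = (x + α + 1) * Real.Gamma (x + α + 1) := by
    have h : ((k + 1 : ℕ) : ℝ) + α + 1 = (x + α + 1) + 1 := by push_cast; ring
    rw [h, Real.Gamma_add_one (ne_of_gt (by linarith))]
  have hfsucc : (Nat.factorial (k + 1) : ℝ) = (x + 1) * (Nat.factorial k : ℝ) := by
    rw [Nat.factorial_succ]
    push_cast
    ring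
  rw [hGsucc, hfsucc]
  have hpow : (x + 2) ^ N ≤ 2 ^ N * (x + 1) ^ N := by
    rw [← mul_pow]
    exact pow_le_pow_left₀ (by linarith) (by linarith) N
  have hQx : Q * 2 ^ N ≤ x := le_trans hK₁ hk₁
  have hxα : 0 ≤ x + α := by linarith [le_trans hK₂ hk₂]
  have hkey : Q * (x + 2) ^ N * 2 ≤ 4 * ((x + 1) * (x + α + 1)) * (x + 1) ^ N := by
    calc Q * (x + 2) ^ N * 2 ≤ Q * (2 ^ N * (x + 1) ^ N) * 2 := by
          apply mul_le_mul_of_nonneg_right (mul_le_mul_of_nonneg_left hpow hQ) (by norm_num)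
      _ = (Q * 2 ^ N) * (x + 1) ^ N * 2 := by ring
      _ ≤ 4 * ((x + 1) * (x + α + 1)) * (x + 1) ^ N := by
          have h1 : (Q * 2 ^ N) * (x + 1) ^ N * 2 ≤ x * (x + 1) ^ N * 2 :=
            mul_le_mul_of_nonneg_right (mul_le_mul_of_nonneg_right hQx (by positivity)) (by norm_num)
          have h2 : x * (x + 1) ^ N * 2 ≤ 4 * ((x + 1) * (x + α + 1)) * (x + 1) ^ N := by
            have h3 : x * 2 ≤ 4 * ((x + 1) * (x + α + 1)) := by nlinarith
            calc x * (x + 1) ^ N * 2 = (x * 2) * (x + 1) ^ N := by ring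
              _ ≤ (4 * ((x + 1) * (x + α + 1))) * (x + 1) ^ N :=
                  mul_le_mul_of_nonneg_right h3 (by positivity)
              _ = 4 * ((x + 1) * (x + α + 1)) * (x + 1) ^ N := rfl
          linarith
  calc Q ^ (k + 1) * (x + 2) ^ N * (2 * (4 ^ k * (Nat.factorial k : ℝ) * Real.Gamma (x + α + 1)))
      = (Q * (x + 2) ^ N * 2) * (Q ^ k * (4 ^ k * (Nat.factorial k : ℝ) *
        Real.Gamma (x + α + 1))) := by ring
    _ ≤ (4 * ((x + 1) * (x + α + 1)) * (x + 1) ^ N) * (Q ^ k * (4 ^ k *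
        (Nat.factorial k : ℝ) * Real.Gamma (x + α + 1))) := by
        apply mul_le_mul_of_nonneg_right hkey
        positivity
    _ = Q ^ k * (x + 1) ^ N * (4 ^ (k + 1) * ((x + 1) * (Nat.factorial k : ℝ)) *
        ((x + α + 1) * Real.Gamma (x + α + 1))) := by ring

lemma besselJ_eq (α : ℝ) (hα : -1 < α) (x : ℝ) (hx : 0 < x) :
    besselJ α x = (x / 2) ^ α * ∑' k : ℕ, besselA α k * (x ^ 2) ^ k := by
  rw [besselJ, ← tsum_mul_left]
  apply tsum_congr
  intro k
  have hx2 : (0 : ℝ) < x / 2 := by linarith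
  have hΓ := Gamma_pos_aux α hα k
  have hfac : (0 : ℝ) < (Nat.factorial k : ℝ) := by exact_mod_cast k.factorial_pos
  have h1 : (x / 2) ^ (2 * (k : ℝ) + α) = (x ^ 2 / 4) ^ k * (x / 2) ^ α := by
    rw [Real.rpow_add hx2]
    congr 1
    rw [show (2 * (k : ℝ)) = ((2 * k : ℕ) : ℝ) by push_cast; ring, Real.rpow_natCast, pow_mul]
    congr 1
    ring
  rw [h1, besselA]
  field_simp
  ring_nf
  rw [mul_assoc, ← mul_pow]
  norm_num

lemma besselJ_entry (α : ℝ) (hα : -1 < α) (T X : ℝ) (hT : 0 < T) (hX : 0 < X) :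
    besselJ α (T * X) = T ^ α * ((X ^ α * (2 : ℝ) ^ (-α)) *
      ∑' k : ℕ, (besselA α k * (T ^ 2) ^ k) * (X ^ 2) ^ k) := by
  rw [besselJ_eq α hα (T * X) (mul_pos hT hX)]
  have h1 : (∑' k : ℕ, besselA α k * ((T * X) ^ 2) ^ k)
      = ∑' k : ℕ, (besselA α k * (T ^ 2) ^ k) * (X ^ 2) ^ k := by
    apply tsum_congr
    intro k
    rw [mul_pow, mul_pow]
    ring
  rw [h1]
  have h2 : (T * X / 2) ^ α = T ^ α * (X ^ α * (2 : ℝ) ^ (-α)) := by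
    rw [show T * X / 2 = T * (X / 2) by ring, Real.mul_rpow hT.le (by positivity),
      Real.div_rpow hX.le (by norm_num), Real.rpow_neg (by norm_num : (0:ℝ) ≤ 2),
      div_eq_mul_inv]
  rw [h2, mul_assoc]

lemma vandermondeProd_eq_Ioi {N : ℕ} (v : Fin N → ℝ) :
    vandermondeProd v = ∏ i : Fin N, ∏ j ∈ Finset.Ioi i, (v j - v i) := by
  rw [vandermondeProd]
  rw [← Finset.prod_sigma (Finset.univ : Finset (Fin N)) (fun i => Finset.Ioi i)
    (fun q => v q.2 - v q.1)]
  refine Finset.prod_bij' (fun p _ => (⟨p.1, p.2⟩ : (i : Fin N) × Fin N))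
    (fun q _ => (q.1, q.2)) ?_ ?_ ?_ ?_ ?_
  · intro p hp
    simp only [Finset.mem_sigma, Finset.mem_univ, Finset.mem_Ioi, true_and]
    exact (Finset.mem_filter.1 hp).2
  · intro q hq
    simp only [Finset.mem_sigma, Finset.mem_univ, Finset.mem_Ioi, true_and] at hq
    rw [Finset.mem_filter]
    exact ⟨Finset.mem_univ _, hq⟩
  · intro p _; rfl
  · intro q _; rfl
  · intro p _; rfl

theorem stmt_5 (α : ℝ) (hα : -1 < α) (N : ℕ) (hN : 1 ≤ N)
    (t : Fin N → ℝ) (htinj : Function.Injective t) (htpos : ∀ i, 0 < t i) :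
    Filter.Tendsto
      (fun x : Fin N → ℝ =>
        (Matrix.of fun i j : Fin N => besselJ α (t j * x i)).det /
          ((∏ k : Fin N, (x k) ^ α) * vandermondeProd (fun k : Fin N => (x k) ^ 2)))
      (nhdsWithin 0 {x : Fin N → ℝ | Function.Injective x ∧ ∀ i, 0 < x i})
      (nhds ((-1 : ℝ) ^ (N * (N - 1) / 2) * (∏ k : Fin N, (t k) ^ α) *
        vandermondeProd (fun k : Fin N => (t k) ^ 2) *
        (2 : ℝ) ^ (-(α * (N : ℝ)) - (N : ℝ) * ((N : ℝ) - 1)) /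
          ∏ j : Fin N, ((Nat.factorial (j : ℕ) : ℝ) * Real.Gamma (α + (j : ℕ) + 1)))) := by
  set S : Set (Fin N → ℝ) := {x | Function.Injective x ∧ ∀ i, 0 < x i} with hS
  set φ : (Fin N → ℝ) → (Fin N → ℝ) := fun x i => x i ^ 2 with hφdef
  set c : Fin N → ℕ → ℝ := fun j k => besselA α k * (t j ^ 2) ^ k with hc
  -- summability hypotheses
  have hs : ∀ j x, Summable fun k => c j k * x ^ k := by
    intro j x
    apply Summable.of_norm
    have hmaster := besselA_master α hα (t j ^ 2 * |x|) (by positivity) 0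
    apply Summable.of_nonneg_of_le (fun k => norm_nonneg _) ?_ hmaster
    intro k
    rw [Real.norm_eq_abs, hc]
    rw [abs_mul, abs_mul, abs_pow, abs_pow, abs_pow]
    rw [pow_zero, mul_one, mul_pow]
    rw [sq_abs]
    exact le_of_eq (by ring)
  have hb : ∀ j, Summable fun k => |c j k| * ((k : ℝ) + 1) ^ N := by
    intro j
    have hmaster := besselA_master α hα (t j ^ 2) (by positivity) N
    apply Summable.congr hmaster
    intro k
    rw [hc]
    rw [abs_mul, abs_pow, abs_of_nonneg (sq_nonneg (t j))]
  have core := core_tendsto c hs hb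
  -- the map φ
  have hφcont : Continuous φ := continuous_pi fun i => (continuous_apply i).pow 2
  have hφ0 : φ 0 = 0 := by
    funext i
    simp [hφdef]
  have hφmaps : ∀ x ∈ S, Function.Injective (φ x) := by
    intro x hx i j h
    have h2 : x i ^ 2 = x j ^ 2 := h
    rcases (Commute.all (x i) (x j)).sq_eq_sq_iff_eq_or_eq_neg.1 h2 with h3 | h3
    · exact hx.1 h3
    · have := hx.2 i
      have := hx.2 j
      linarith
  have hφtend : Filter.Tendsto φ (nhdsWithin 0 S) (nhdsWithin 0 {u : Fin N → ℝ | Function.Injective u}) := by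
    rw [tendsto_nhdsWithin_iff]
    constructor
    · have := hφcont.tendsto 0
      rw [hφ0] at this
      exact this.mono_left nhdsWithin_le_nhds
    · filter_upwards [self_mem_nhdsWithin] with x hx
      exact hφmaps x hx
  have hcomp := core.comp hφtend
  set C : ℝ := (∏ j, t j ^ α) * ((2 : ℝ) ^ (-α)) ^ N with hC
  have hmul := hcomp.const_mul C
  -- eventual equality of the two functions
  have heq : (fun x : Fin N → ℝ => C *
      ((Matrix.of fun l j' => ∑' k : ℕ, c j' k * (φ x) l ^ k).det / vandermondeProd (φ x)))
      =ᶠ[nhdsWithin 0 S] (fun x : Fin N → ℝ =>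
        (Matrix.of fun i j : Fin N => besselJ α (t j * x i)).det /
          ((∏ k : Fin N, (x k) ^ α) * vandermondeProd (fun k : Fin N => (x k) ^ 2))) := by
    filter_upwards [self_mem_nhdsWithin] with x hx
    have hxinj : Function.Injective x := hx.1
    have hxpos : ∀ i, 0 < x i := hx.2
    -- factor the Bessel matrix
    have hmat : (Matrix.of fun i j : Fin N => besselJ α (t j * x i))
        = Matrix.of fun i j : Fin N => (t j ^ α) *
          ((Matrix.of fun i j : Fin N => ((x i) ^ α * (2 : ℝ) ^ (-α)) *
            (Matrix.of fun l j' => ∑' k : ℕ, c j' k * (φ x) l ^ k) i j) i j) := by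
      ext i j
      simp only [Matrix.of_apply]
      exact besselJ_entry α hα (t j) (x i) (htpos j) (hxpos i)
    have hdet1 : (Matrix.of fun i j : Fin N => besselJ α (t j * x i)).det
        = (∏ j, t j ^ α) * ((∏ i, (x i) ^ α * (2 : ℝ) ^ (-α)) *
          (Matrix.of fun l j' => ∑' k : ℕ, c j' k * (φ x) l ^ k).det) := by
      rw [hmat, Matrix.det_mul_row, Matrix.det_mul_column]
    have hprod : (∏ i, (x i) ^ α * (2 : ℝ) ^ (-α))
        = (∏ i, (x i) ^ α) * ((2 : ℝ) ^ (-α)) ^ N := by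
      rw [Finset.prod_mul_distrib, Finset.prod_const, Finset.card_univ, Fintype.card_fin]
    have hxprod_ne : (∏ k : Fin N, (x k) ^ α) ≠ 0 := by
      apply Finset.prod_ne_zero_iff.2
      intro i _
      exact ne_of_gt (Real.rpow_pos_of_pos (hxpos i) α)
    have hvan_ne : vandermondeProd (φ x) ≠ 0 := by
      rw [vandermondeProd_eq_dblProd]
      exact dblProd_ne_zero _ (hφmaps x hx)
    have hφx : (fun k : Fin N => (x k) ^ 2) = φ x := rfl
    rw [hφx, hdet1, hprod, hC]
    field_simp
  have hfinal := Filter.Tendsto.congr' heq hmul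
  have hval : ((-1 : ℝ) ^ (N * (N - 1) / 2) * (∏ k : Fin N, (t k) ^ α) *
        vandermondeProd (fun k : Fin N => (t k) ^ 2) *
        (2 : ℝ) ^ (-(α * (N : ℝ)) - (N : ℝ) * ((N : ℝ) - 1)) /
          ∏ j : Fin N, ((Nat.factorial (j : ℕ) : ℝ) * Real.Gamma (α + (j : ℕ) + 1)))
      = C * (Matrix.of (fun i j : Fin N => c j i.val)).det := by
    have hdetc : (Matrix.of (fun i j : Fin N => c j i.val)).det
        = (∏ i : Fin N, besselA α i.val) * vandermondeProd (fun k : Fin N => t k ^ 2) := by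
      have h1 : (Matrix.of (fun i j : Fin N => c j i.val))
          = Matrix.of fun i j : Fin N => besselA α i.val *
            ((Matrix.vandermonde (fun k : Fin N => t k ^ 2)).transpose i j) := by
        ext i j
        simp [hc, Matrix.vandermonde, Matrix.transpose_apply]
      rw [h1, Matrix.det_mul_column, Matrix.det_transpose, Matrix.det_vandermonde,
        ← vandermondeProd_eq_Ioi]
    have hsum : ∑ i : Fin N, (i : ℕ) = N * (N - 1) / 2 := by
      rw [Fin.sum_univ_eq_sum_range (fun i => i) N, Finset.sum_range_id]
    have hP : (∏ i : Fin N, besselA α i.val)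
        = ((-1 : ℝ) ^ (N * (N - 1) / 2)) / ((4 : ℝ) ^ (N * (N - 1) / 2) *
          ∏ j : Fin N, ((Nat.factorial (j : ℕ) : ℝ) * Real.Gamma (α + (j : ℕ) + 1))) := by
      have h1 : ∀ i : Fin N, besselA α i.val
          = (-1 : ℝ) ^ (i : ℕ) / ((4 : ℝ) ^ (i : ℕ) *
            ((Nat.factorial (i : ℕ) : ℝ) * Real.Gamma (α + (i : ℕ) + 1))) := by
        intro i
        rw [besselA]
        have harg : ((i : ℕ) : ℝ) + α + 1 = α + (i : ℕ) + 1 := by ring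
        rw [harg, mul_assoc]
      rw [Finset.prod_congr rfl fun i _ => h1 i, Finset.prod_div_distrib,
        Finset.prod_mul_distrib, Finset.prod_pow_eq_pow_sum, Finset.prod_pow_eq_pow_sum, hsum]
    have heven : 2 * (N * (N - 1) / 2) = N * (N - 1) := by
      have h2 : Even ((N - 1) * ((N - 1) + 1)) := Nat.even_mul_succ_self (N - 1)
      have h3 : (N - 1) + 1 = N := by omega
      rw [h3] at h2
      have h4 : Even (N * (N - 1)) := by rwa [mul_comm]
      obtain ⟨m, hm⟩ := h4
      omega
    have h4 : ((4 : ℝ)) ^ (N * (N - 1) / 2) = 2 ^ (N * (N - 1)) := by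
      rw [show (4 : ℝ) = 2 ^ 2 by norm_num, ← pow_mul, heven]
    have hcast : ((N : ℝ)) * ((N : ℝ) - 1) = ((N * (N - 1) : ℕ) : ℝ) := by
      push_cast [Nat.cast_sub (by omega : 1 ≤ N)]
      ring
    have hrpow : (2 : ℝ) ^ (-(α * (N : ℝ)) - (N : ℝ) * ((N : ℝ) - 1))
        = ((2 : ℝ) ^ (-α)) ^ N * ((4 : ℝ) ^ (N * (N - 1) / 2))⁻¹ := by
      rw [show (-(α * (N : ℝ)) - (N : ℝ) * ((N : ℝ) - 1))
          = (-α) * (N : ℝ) + (-((N : ℝ) * ((N : ℝ) - 1))) by ring]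
      rw [Real.rpow_add (by norm_num : (0:ℝ) < 2)]
      congr 1
      · rw [Real.rpow_mul (by norm_num : (0:ℝ) ≤ 2), Real.rpow_natCast]
      · rw [Real.rpow_neg (by norm_num : (0:ℝ) ≤ 2), hcast, Real.rpow_natCast, h4]
    have hF_ne : (∏ j : Fin N, ((Nat.factorial (j : ℕ) : ℝ) * Real.Gamma (α + (j : ℕ) + 1))) ≠ 0 := by
      apply Finset.prod_ne_zero_iff.2
      intro i _
      have hΓ := Gamma_pos_aux α hα (i : ℕ)
      have harg : ((i : ℕ) : ℝ) + α + 1 = α + (i : ℕ) + 1 := by ring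
      rw [harg] at hΓ
      have hfac : (0 : ℝ) < (Nat.factorial (i : ℕ) : ℝ) := by
        exact_mod_cast (Nat.factorial_pos _)
      positivity
    have h4_ne : ((4 : ℝ) ^ (N * (N - 1) / 2)) ≠ 0 := by positivity
    rw [hdetc, hP, hC, hrpow]
    field_simp
  rw [hval]
  exact hfinal
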